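/- arXiv:0802.2654 — 2 statements merged into one kernel-verified Lean document; each statement's English description precedes it below -/
import Mathlib

section
/- For every n ≥ 0, the number of odd coefficients of (1+x+x^2+x^3)^n equals 2^s(3n), where s(m) denotes the number of 1s in the binary expansion of m. -/
open Polynomial

/-- The number of odd coefficients of a polynomial over ℤ. -/
noncomputable def oddCoeffCount (p : Polynomial ℤ) : ℕ :=
  (p.support.filter fun j => Odd (p.coeff j)).card

noncomputable def g3 (n : ℕ) : ℕ := oddCoeffCount ((1 + X + X ^ 2 + X ^ 3) ^ n)

/-- number of ones in the binary expansion -/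
def s (m : ℕ) : ℕ := (Nat.digits 2 m).sum

lemma s_rec {m : ℕ} (hm : 0 < m) : s m = m % 2 + s (m / 2) := by
  unfold s
  rw [Nat.digits_def' (by norm_num : 1 < 2) hm]
  simp

lemma sq_eq_expand (p : (ZMod 2)[X]) : p ^ 2 = Polynomial.expand (ZMod 2) 2 p := by
  have h := Polynomial.map_frobenius_expand (p := 2) p
  rw [ZMod.frobenius_zmod, Polynomial.map_id] at h
  exact h.symm

lemma expand_support (p : (ZMod 2)[X]) :
    (Polynomial.expand (ZMod 2) 2 p).support = p.support.map ⟨(2 * ·), mul_right_injective₀ two_ne_zero⟩ := by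
  ext n
  simp only [Polynomial.mem_support_iff, Finset.mem_map, Function.Embedding.coeFn_mk,
    Polynomial.coeff_expand (by norm_num : 0 < 2)]
  constructor
  · intro h
    split_ifs at h with hd
    · exact ⟨n / 2, by simpa using h, by omega⟩
    · exact absurd rfl h
  · rintro ⟨a, ha, rfl⟩
    rw [if_pos ⟨a, rfl⟩]
    simpa [Nat.mul_div_cancel_left] using ha

lemma sq_support_card (p : (ZMod 2)[X]) : (p ^ 2).support.card = p.support.card := by
  rw [sq_eq_expand, expand_support, Finset.card_map]

lemma onePlusX_mul_support (q : (ZMod 2)[X]) (hq : ∀ n, ¬ 2 ∣ n → q.coeff n = 0) :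
    ((1 + X) * q).support = q.support ∪ q.support.map ⟨Nat.succ, Nat.succ_injective⟩ := by
  have hexp : (1 + X) * q = q + X * q := by ring
  ext n
  simp only [hexp, Polynomial.mem_support_iff, Finset.mem_union, Finset.mem_map,
    Function.Embedding.coeFn_mk, Polynomial.coeff_add]
  cases n with
  | zero =>
      simp only [Polynomial.mul_coeff_zero, Polynomial.coeff_X_zero, zero_mul, add_zero]
      constructor
      · intro h; exact Or.inl h
      · rintro (h | ⟨a, _, ha⟩)
        · exact h
        · exact absurd ha (by omega)
  | succ k =>
      rw [Polynomial.coeff_X_mul]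
      rcases Nat.even_or_odd k with ⟨r, rfl⟩ | ⟨r, rfl⟩
      · have h1 : q.coeff (r + r + 1) = 0 := hq _ (by omega)
        rw [h1, zero_add]
        constructor
        · intro h; exact Or.inr ⟨r + r, h, rfl⟩
        · rintro (h | ⟨a, ha, hak⟩)
          · exact absurd h1 (by simpa using h)
          · have : a = r + r := by omega
            subst this; exact ha
      · have h1 : q.coeff (2 * r + 1) = 0 := hq _ (by omega)
        rw [h1, add_zero]
        constructor
        · intro h; exact Or.inl h
        · rintro (h | ⟨a, ha, hak⟩)
          · exact h
          · have : a = 2 * r + 1 := by omega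
            subst this
            exact absurd h1 ha

lemma onePlusX_mul_card (q : (ZMod 2)[X]) (hq : ∀ n, ¬ 2 ∣ n → q.coeff n = 0) :
    ((1 + X) * q).support.card = 2 * q.support.card := by
  rw [onePlusX_mul_support q hq, Finset.card_union_of_disjoint, Finset.card_map, two_mul]
  rw [Finset.disjoint_left]
  intro a ha hb
  simp only [Finset.mem_map, Function.Embedding.coeFn_mk] at hb
  obtain ⟨b, hb, rfl⟩ := hb
  rw [Polynomial.mem_support_iff] at ha hb
  have h2a : 2 ∣ b.succ := by
    by_contra h
    exact ha (hq _ h)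
  have h2b : 2 ∣ b := by
    by_contra h
    exact hb (hq _ h)
  omega

lemma count_onePlusX_pow : ∀ m : ℕ, ((1 + X : (ZMod 2)[X]) ^ m).support.card = 2 ^ s m := by
  intro m
  induction m using Nat.strong_induction_on with
  | _ m ih =>
    rcases Nat.eq_zero_or_pos m with rfl | hm
    · have : ((1 + X : (ZMod 2)[X]) ^ 0) = C 1 := by simp
      rw [this, Polynomial.support_C (by norm_num : (1 : ZMod 2) ≠ 0)]
      simp [s]
    · have hrec := s_rec hm
      rcases Nat.even_or_odd m with ⟨k, rfl⟩ | ⟨k, rfl⟩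
      · have e1 : (1 + X : (ZMod 2)[X]) ^ (k + k) = ((1 + X) ^ k) ^ 2 := by
          rw [show k + k = k * 2 by ring, pow_mul]
        rw [e1, sq_support_card, ih k (by omega), hrec,
          show (k + k) % 2 = 0 by omega, show (k + k) / 2 = k by omega, zero_add]
      · have h1 : (1 + X : (ZMod 2)[X]) ^ (2 * k + 1) = (1 + X) * ((1 + X) ^ k) ^ 2 := by
          rw [show 2 * k + 1 = k * 2 + 1 by ring, pow_succ', pow_mul]
        rw [h1, sq_eq_expand, onePlusX_mul_card, ← sq_eq_expand, sq_support_card,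
          ih k (by omega), hrec,
          show (2 * k + 1) % 2 = 1 by omega, show (2 * k + 1) / 2 = k by omega,
          pow_add, pow_one]
        intro n hn
        rw [Polynomial.coeff_expand (by norm_num : 0 < 2), if_neg hn]

lemma odd_iff_cast (a : ℤ) : ((a : ZMod 2) ≠ 0) ↔ Odd a := by
  rw [Ne, ZMod.intCast_zmod_eq_zero_iff_dvd, Int.odd_iff]
  push_cast
  omega

lemma oddCoeffCount_eq (p : Polynomial ℤ) :
    oddCoeffCount p = (p.map (Int.castRingHom (ZMod 2))).support.card := by
  unfold oddCoeffCount
  congr 1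
  ext j
  simp only [Finset.mem_filter, Polynomial.mem_support_iff, Polynomial.coeff_map,
    Int.coe_castRingHom]
  rw [odd_iff_cast]
  constructor
  · tauto
  · intro h
    refine ⟨?_, h⟩
    rintro h0
    rw [h0] at h
    simpa using h

theorem stmt_7 : ∀ n : ℕ, g3 n = 2 ^ s (3 * n) := by
  intro n
  unfold g3
  rw [oddCoeffCount_eq]
  have hmap : (((1 + X + X ^ 2 + X ^ 3 : Polynomial ℤ) ^ n).map (Int.castRingHom (ZMod 2)))
      = (1 + X + X ^ 2 + X ^ 3 : (ZMod 2)[X]) ^ n := by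
    simp [Polynomial.map_pow, Polynomial.map_add, Polynomial.map_one]
  have hfac : (1 + X + X ^ 2 + X ^ 3 : (ZMod 2)[X]) = (1 + X) ^ 3 := by
    have h2 : ((2 : ℕ) : (ZMod 2)[X]) = 0 := by
      exact_mod_cast CharP.cast_eq_zero ((ZMod 2)[X]) 2
    push_cast at h2
    linear_combination (-(X + X ^ 2) : (ZMod 2)[X]) * h2
  rw [hmap, hfac, ← pow_mul, mul_comm 3 n, ← count_onePlusX_pow, mul_comm n 3]
end

section
/- The summatory function of binary digit sums restricted to multiples of 3 satisfies ∑_{k=0}^{⌊n/3⌋} s(3k) ~ (1/(2 ln 2))·(n/3)·ln(n) as n → ∞, where s(m) is the number of 1s in the binary expansion of m. -/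
lemma s_bits : ∀ (L : ℕ), ∀ m < 2^L, s m = ∑ j ∈ Finset.range L, m / 2^j % 2 := by
  intro L
  induction L with
  | zero => intro m hm; interval_cases m; simp [s]
  | succ L ih =>
    intro m hm
    rcases Nat.eq_zero_or_pos m with rfl | hm0
    · simp [s]
    have h1 : s m = m % 2 + s (m / 2) := by
      unfold s
      rw [Nat.digits_def' (by norm_num : 1 < 2) hm0, List.sum_cons]
    rw [h1, Finset.sum_range_succ']
    have h2 : ∀ j, m / 2 ^ (j + 1) = (m / 2) / 2 ^ j := by
      intro j
      rw [pow_succ', Nat.div_div_eq_div_mul]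
    have h3 : m / 2 < 2 ^ L := by
      have : m < 2 ^ L * 2 := by rw [← pow_succ]; exact hm
      omega
    simp only [h2]
    rw [← ih _ h3]
    simp [pow_zero, Nat.div_one]
    ring



lemma sum_split (f : ℕ → ℕ) (a b : ℕ) :
    ∑ m ∈ Finset.range (a + b), f m = (∑ m ∈ Finset.range a, f m) + ∑ i ∈ Finset.range b, f (a + i) := by
  rw [← Finset.sum_range_add_sum_Ico f (Nat.le_add_right a b), Finset.sum_Ico_eq_sum_range]
  simp

lemma sum_div_range (j : ℕ) : ∑ m ∈ Finset.range (2^(j+1)), m / 2^j = 2^j := by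
  have h : (2:ℕ)^(j+1) = 2^j + 2^j := by rw [pow_succ]; ring
  rw [h, sum_split]
  have hp : 0 < 2^j := Nat.pow_pos (n := j) (by norm_num)
  have h1 : ∀ m ∈ Finset.range (2^j), m / 2^j = 0 := fun m hm =>
    Nat.div_eq_of_lt (Finset.mem_range.mp hm)
  have h2 : ∀ i ∈ Finset.range (2^j), (2^j + i) / 2^j = 1 := by
    intro i hi
    have hii := Finset.mem_range.mp hi
    rw [Nat.add_comm, Nat.add_div_right _ hp, Nat.div_eq_of_lt hii]
  rw [Finset.sum_congr rfl h1, Finset.sum_congr rfl h2]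
  simp

lemma coprime3 (j : ℕ) : Nat.Coprime 3 (2^(j+1)) :=
  Nat.Coprime.pow_right _ (by norm_num)

lemma block_sum (j : ℕ) : ∑ k ∈ Finset.range (2^(j+1)), 3*k % 2^(j+1) / 2^j = 2^j := by
  set d := 2^(j+1) with hd
  have hd1 : 1 < d := Nat.one_lt_two_pow (by omega)
  obtain ⟨t, -, ht⟩ := Nat.exists_mul_mod_eq_one_of_coprime (coprime3 j) hd1
  have h3t : (3*t) ≡ 1 [MOD d] := by
    unfold Nat.ModEq; rw [ht, Nat.mod_eq_of_lt hd1]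
  have key : ∀ a, a < d → (t * (3 * a % d)) % d = a := by
    intro a ha
    have h1 : t * (3*a % d) ≡ 1*a [MOD d] := by
      calc t * (3*a % d) ≡ t*(3*a) [MOD d] := Nat.ModEq.mul_left t (Nat.mod_modEq _ _)
      _ = (3*t)*a := by ring
      _ ≡ 1*a [MOD d] := Nat.ModEq.mul_right a h3t
    rw [h1, one_mul, Nat.mod_eq_of_lt ha]
  have key2 : ∀ a, a < d → (3 * (t * a % d)) % d = a := by
    intro a ha
    have h1 : 3 * (t*a % d) ≡ 1*a [MOD d] := by
      calc 3 * (t*a % d) ≡ 3*(t*a) [MOD d] := Nat.ModEq.mul_left 3 (Nat.mod_modEq _ _)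
      _ = (3*t)*a := by ring
      _ ≡ 1*a [MOD d] := Nat.ModEq.mul_right a h3t
    rw [h1, one_mul, Nat.mod_eq_of_lt ha]
  have main : ∑ k ∈ Finset.range d, 3*k % d / 2^j = ∑ m ∈ Finset.range d, m / 2^j := by
    refine Finset.sum_nbij' (fun k => 3*k % d) (fun m => t*m % d) ?_ ?_ ?_ ?_ ?_
    · intro k _; exact Finset.mem_range.mpr (Nat.mod_lt _ (by omega))
    · intro m _; exact Finset.mem_range.mpr (Nat.mod_lt _ (by omega))
    · intro k hk; exact key k (Finset.mem_range.mp hk)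
    · intro m hm; exact key2 m (Finset.mem_range.mp hm)
    · intro k _; rfl
  rw [main, sum_div_range]

lemma multi_block (j q : ℕ) :
    ∑ k ∈ Finset.range (q * 2^(j+1)), 3*k % 2^(j+1) / 2^j = q * 2^j := by
  induction q with
  | zero => simp
  | succ q ih =>
    rw [Nat.succ_mul, sum_split, ih]
    have : ∀ i ∈ Finset.range (2^(j+1)),
        3*(q * 2^(j+1) + i) % 2^(j+1) / 2^j = 3*i % 2^(j+1) / 2^j := by
      intro i _
      congr 1
      rw [show 3*(q * 2^(j+1) + i) = 3*i + (3*q) * 2^(j+1) by ring, Nat.add_mul_mod_self_right]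
    rw [Finset.sum_congr rfl this, block_sum, Nat.succ_mul]

lemma N_lt (N d : ℕ) (hd : 0 < d) : N < (N / d + 1) * d := by
  have h := Nat.div_add_mod N d
  have h2 := Nat.mod_lt N hd
  calc N = d * (N / d) + N % d := h.symm
  _ < d * (N / d) + d := by omega
  _ = (N / d + 1) * d := by ring

lemma A_lower (j N : ℕ) :
    N / 2^(j+1) * 2^j ≤ ∑ k ∈ Finset.range N, 3*k % 2^(j+1) / 2^j := by
  rw [← multi_block j (N / 2^(j+1))]
  exact Finset.sum_le_sum_of_subset
    (Finset.range_subset_range.mpr (Nat.div_mul_le_self N _))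

lemma A_upper (j N : ℕ) :
    ∑ k ∈ Finset.range N, 3*k % 2^(j+1) / 2^j ≤ (N / 2^(j+1) + 1) * 2^j := by
  rw [← multi_block j (N / 2^(j+1) + 1)]
  refine Finset.sum_le_sum_of_subset (Finset.range_subset_range.mpr ?_)
  exact le_of_lt (N_lt N _ (Nat.pow_pos (by norm_num)))

lemma A_err (j N : ℕ) :
    |((∑ k ∈ Finset.range N, 3*k % 2^(j+1) / 2^j : ℕ) : ℝ) - N / 2| ≤ 2^j := by
  have hl := A_lower j N
  have hu := A_upper j N
  set q := N / 2^(j+1) with hq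
  have h1 : q * 2^(j+1) ≤ N := Nat.div_mul_le_self N _
  have h2 : N < (q+1) * 2^(j+1) := N_lt N _ (Nat.pow_pos (by norm_num))
  set A := ∑ k ∈ Finset.range N, 3*k % 2^(j+1) / 2^j with hA
  have cl : ((q * 2^j : ℕ) : ℝ) ≤ (A:ℝ) := Nat.cast_le.mpr hl
  have cu : (A:ℝ) ≤ (((q+1) * 2^j : ℕ) : ℝ) := Nat.cast_le.mpr hu
  have c1 : ((q * 2^(j+1) : ℕ) : ℝ) ≤ (N:ℝ) := Nat.cast_le.mpr h1
  have c2 : (N:ℝ) < (((q+1) * 2^(j+1) : ℕ) : ℝ) := Nat.cast_lt.mpr h2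
  push_cast at cl cu c1 c2
  rw [pow_succ] at c1 c2
  rw [abs_le]
  constructor <;> nlinarith

lemma T_bound (n : ℕ) (hn : 1 ≤ n) :
    |(∑ k ∈ Finset.range (n/3 + 1), (s (3*k) : ℝ)) -
      ((Nat.log 2 n + 1 : ℕ) : ℝ) * ((n/3 + 1 : ℕ) : ℝ) / 2| ≤ 2 * n := by
  set N := n/3 + 1 with hN
  set L := Nat.log 2 n + 1 with hL
  have hswap : ∑ k ∈ Finset.range N, s (3*k)
      = ∑ j ∈ Finset.range L, ∑ k ∈ Finset.range N, 3*k % 2^(j+1) / 2^j := by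
    rw [Finset.sum_comm]
    refine Finset.sum_congr rfl fun k hk => ?_
    have hk3 : 3*k < 2^L := by
      have h1 : 3*k ≤ n := by
        have := Finset.mem_range.mp hk
        omega
      exact lt_of_le_of_lt h1 (Nat.lt_pow_succ_log_self (by norm_num) n)
    rw [s_bits L _ hk3]
    refine Finset.sum_congr rfl fun j _ => ?_
    rw [← Nat.mod_mul_right_div_self, ← pow_succ]
  have cast_swap : (∑ k ∈ Finset.range N, (s (3*k) : ℝ))
      = ∑ j ∈ Finset.range L, ((∑ k ∈ Finset.range N, 3*k % 2^(j+1) / 2^j : ℕ) : ℝ) := by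
    calc (∑ k ∈ Finset.range N, (s (3*k) : ℝ))
        = ((∑ k ∈ Finset.range N, s (3*k) : ℕ) : ℝ) := by push_cast; rfl
    _ = ((∑ j ∈ Finset.range L, ∑ k ∈ Finset.range N, 3*k % 2^(j+1) / 2^j : ℕ) : ℝ) := by
        rw [hswap]
    _ = ∑ j ∈ Finset.range L, ((∑ k ∈ Finset.range N, 3*k % 2^(j+1) / 2^j : ℕ) : ℝ) := by
        push_cast; rfl
  rw [cast_swap]
  have h1 : ((L:ℕ):ℝ) * (N:ℝ) / 2 = ∑ j ∈ Finset.range L, ((N:ℝ)/2) := by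
    rw [Finset.sum_const, Finset.card_range]; push_cast; ring
  rw [h1, ← Finset.sum_sub_distrib]
  refine le_trans (Finset.abs_sum_le_sum_abs _ _) ?_
  refine le_trans (Finset.sum_le_sum fun j _ => A_err j N) ?_
  have hgeom : ∑ j ∈ Finset.range L, (2:ℝ)^j = 2^L - 1 := by
    have := geom_sum_eq (by norm_num : (2:ℝ) ≠ 1) L
    rw [this]; norm_num
  rw [hgeom]
  have h2L : (2:ℝ)^L ≤ 2 * n := by
    have : (2:ℕ)^L ≤ 2 * n := by
      rw [hL, pow_succ]
      have := Nat.pow_log_le_self 2 (by omega : n ≠ 0)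
      omega
    exact_mod_cast this
  linarith

noncomputable def Tf (n : ℕ) : ℝ := ∑ k ∈ Finset.range (n/3 + 1), (s (3*k) : ℝ)
noncomputable def Df (n : ℕ) : ℝ := (1 / (2 * Real.log 2)) * ((n : ℝ) / 3) * Real.log n
noncomputable def Mf (n : ℕ) : ℝ := ((Nat.log 2 n + 1 : ℕ) : ℝ) * ((n/3 + 1 : ℕ) : ℝ) / 2

lemma log2pos : 0 < Real.log 2 := Real.log_pos (by norm_num)

lemma logn_pos {n : ℕ} (hn : 2 ≤ n) : 0 < Real.log n :=
  Real.log_pos (by exact_mod_cast Nat.lt_of_lt_of_le (by norm_num) hn)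

lemma invlog_to_zero (c : ℝ) :
    Filter.Tendsto (fun n : ℕ => c / Real.log n) Filter.atTop (nhds 0) :=
  Filter.Tendsto.div_atTop tendsto_const_nhds
    (Real.tendsto_log_atTop.comp tendsto_natCast_atTop_atTop)

lemma Dpos {n : ℕ} (hn : 2 ≤ n) : 0 < Df n := by
  have h1 : (0:ℝ) < n := by exact_mod_cast Nat.lt_of_lt_of_le (by norm_num) hn
  have := logn_pos hn
  have := log2pos
  unfold Df
  positivity

-- log bounds
lemma Lln_bounds {n : ℕ} (hn : 2 ≤ n) :
    Real.log n < ((Nat.log 2 n + 1 : ℕ) : ℝ) * Real.log 2 ∧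
    ((Nat.log 2 n + 1 : ℕ) : ℝ) * Real.log 2 ≤ Real.log n + Real.log 2 := by
  have hn0 : (0:ℝ) < n := by exact_mod_cast Nat.lt_of_lt_of_le (by norm_num) hn
  constructor
  · have h := Nat.lt_pow_succ_log_self (by norm_num : 1 < 2) n
    have hc : (n:ℝ) < (2:ℝ)^(Nat.log 2 n + 1) := by exact_mod_cast h
    have := Real.log_lt_log hn0 hc
    rw [Real.log_pow] at this
    push_cast at this ⊢
    linarith
  · have h := Nat.pow_log_le_self 2 (by omega : n ≠ 0)
    have hc : (2:ℝ)^(Nat.log 2 n) ≤ (n:ℝ) := by exact_mod_cast h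
    have := Real.log_le_log (by positivity) hc
    rw [Real.log_pow] at this
    push_cast
    linarith

lemma f1_tendsto :
    Filter.Tendsto (fun n : ℕ => Real.log 2 * ((Nat.log 2 n + 1 : ℕ) : ℝ) / Real.log n)
      Filter.atTop (nhds 1) := by
  refine tendsto_of_tendsto_of_tendsto_of_le_of_le' (tendsto_const_nhds)
    (by simpa using (tendsto_const_nhds.add (invlog_to_zero (Real.log 2))) :
      Filter.Tendsto (fun n : ℕ => 1 + Real.log 2 / Real.log n) Filter.atTop (nhds 1)) ?_ ?_
  · filter_upwards [Filter.eventually_ge_atTop 2] with n hn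
    obtain ⟨h1, _⟩ := Lln_bounds hn
    have hl := logn_pos hn
    rw [le_div_iff₀ hl, mul_comm]
    linarith
  · filter_upwards [Filter.eventually_ge_atTop 2] with n hn
    obtain ⟨_, h2⟩ := Lln_bounds hn
    have hl := logn_pos hn
    rw [div_le_iff₀ hl, mul_comm (Real.log 2)]
    have : (1 + Real.log 2 / Real.log n) * Real.log n = Real.log n + Real.log 2 := by
      field_simp
    rw [this]
    linarith

lemma f2_tendsto :
    Filter.Tendsto (fun n : ℕ => 3 * ((n/3 + 1 : ℕ) : ℝ) / (n : ℝ))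
      Filter.atTop (nhds 1) := by
  have hub : Filter.Tendsto (fun n : ℕ => 1 + (3:ℝ) / (n:ℝ)) Filter.atTop (nhds 1) := by
    have h0 : Filter.Tendsto (fun n : ℕ => (3:ℝ) / (n:ℝ)) Filter.atTop (nhds 0) :=
      Filter.Tendsto.div_atTop tendsto_const_nhds tendsto_natCast_atTop_atTop
    simpa using tendsto_const_nhds.add h0
  refine tendsto_of_tendsto_of_tendsto_of_le_of_le' (tendsto_const_nhds) hub ?_ ?_
  · filter_upwards [Filter.eventually_ge_atTop 1] with n hn
    have hn0 : (0:ℝ) < n := by exact_mod_cast hn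
    rw [le_div_iff₀ hn0, one_mul]
    have : n ≤ 3 * (n/3 + 1) := by omega
    exact_mod_cast this
  · filter_upwards [Filter.eventually_ge_atTop 1] with n hn
    have hn0 : (0:ℝ) < n := by exact_mod_cast hn
    rw [div_le_iff₀ hn0]
    have h : 3 * (n/3 + 1) ≤ n + 3 := by omega
    have hc : 3 * ((n/3 + 1 : ℕ) : ℝ) ≤ (n:ℝ) + 3 := by exact_mod_cast h
    have : (1 + (3:ℝ)/(n:ℝ)) * n = n + 3 := by field_simp
    rw [this]
    exact hc

lemma main_tendsto :
    Filter.Tendsto (fun n : ℕ => Mf n / Df n) Filter.atTop (nhds 1) := by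
  have h := f1_tendsto.mul f2_tendsto
  rw [mul_one] at h
  refine h.congr' ?_
  filter_upwards [Filter.eventually_ge_atTop 2] with n hn
  have hn0 : (0:ℝ) < n := by exact_mod_cast Nat.lt_of_lt_of_le (by norm_num) hn
  have hl := logn_pos hn
  have h2 := log2pos
  unfold Mf Df
  field_simp

lemma err_tendsto :
    Filter.Tendsto (fun n : ℕ => (Tf n - Mf n) / Df n) Filter.atTop (nhds 0) := by
  refine squeeze_zero_norm' (a := fun n : ℕ => 12 * Real.log 2 / Real.log n) ?_ (invlog_to_zero _)
  · filter_upwards [Filter.eventually_ge_atTop 2] with n hn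
    have hn0 : (0:ℝ) < n := by exact_mod_cast Nat.lt_of_lt_of_le (by norm_num) hn
    have hl := logn_pos hn
    have h2 := log2pos
    have hD := Dpos hn
    have hb := T_bound n (by omega)
    rw [Real.norm_eq_abs, abs_div, abs_of_pos hD, div_le_iff₀ hD]
    have hDval : (12 * Real.log 2 / Real.log n) * Df n = 2 * n := by
      unfold Df; field_simp; ring
    rw [hDval]
    exact hb

theorem stmt_18 :
    Filter.Tendsto
      (fun n : ℕ =>
        (∑ k ∈ Finset.range (n / 3 + 1), (s (3 * k) : ℝ)) /
          ((1 / (2 * Real.log 2)) * ((n : ℝ) / 3) * Real.log n))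
      Filter.atTop (nhds 1) := by
  have h := main_tendsto.add err_tendsto
  rw [add_zero] at h
  refine h.congr ?_
  intro n
  show Mf n / Df n + (Tf n - Mf n) / Df n = Tf n / Df n
  ring
end
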